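/- Let ν, ℓ be positive integers, and F_a(z) = log Γ(z + a) − log Γ(a) − z log a + z/(2a). Then for any real w and any fixed real part shift, 2ν·Re(F_ν(iw) − F_{ν+ℓ}(iw)) ≤ −ν|w| ∫_{ν/|w|}^{(ν+ℓ)/|w|} dθ/(1 + θ²). -/

import Mathlib

/-- `F_a(z) = log Γ(z + a) − log Γ(a) − z log a + z/(2a)`. -/
noncomputable def Fgamma (a : ℝ) (z : ℂ) : ℂ :=
  Complex.log (Complex.Gamma (z + (a : ℂ))) - Complex.log (Complex.Gamma (a : ℂ))
    - z * Complex.log (a : ℂ) + z / (2 * (a : ℂ))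

lemma Gamma_prod (z : ℂ) (hz : 0 < z.re) (ℓ : ℕ) :
    Complex.Gamma (z + ℓ) = (∏ k ∈ Finset.range ℓ, (z + k)) * Complex.Gamma z := by
  induction ℓ with
  | zero => simp
  | succ n ih =>
    have hne : z + n ≠ 0 := by
      intro h
      have h2 : (z + (n:ℂ)).re = 0 := by rw [h]; simp
      simp only [Complex.add_re, Complex.natCast_re] at h2
      have : (0:ℝ) ≤ n := Nat.cast_nonneg n
      linarith
    have e : (z + ((n+1 : ℕ) : ℂ)) = (z + n) + 1 := by push_cast; ring
    rw [e, Complex.Gamma_add_one _ hne, ih, Finset.prod_range_succ]; ring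

lemma reF (a : ℝ) (ha : 0 < a) (w : ℝ) :
    (Fgamma a ((w:ℂ) * Complex.I)).re
      = Real.log (‖Complex.Gamma ((w:ℂ) * Complex.I + a)‖)
        - Real.log (Real.Gamma a) := by
  have h1 : Complex.log (a : ℂ) = ((Real.log a : ℝ) : ℂ) := (Complex.ofReal_log ha.le).symm
  have h2 : Complex.Gamma (a : ℂ) = ((Real.Gamma a : ℝ) : ℂ) := Complex.Gamma_ofReal a
  simp only [Fgamma, Complex.sub_re, Complex.add_re, Complex.log_re, h1, h2]
  have : ((w:ℂ) * Complex.I * (Real.log a : ℂ)).re = 0 := by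
    simp [Complex.mul_re]
  rw [this]
  have : ((w:ℂ) * Complex.I / (2 * (a:ℂ))).re = 0 := by
    rw [div_eq_mul_inv]
    have : ((2 * (a:ℂ))⁻¹) = (((2*a)⁻¹ : ℝ) : ℂ) := by push_cast; ring
    simp [this, Complex.mul_re]
  rw [this]
  simp [Complex.norm_real, abs_of_pos (Real.Gamma_pos_of_pos ha)]

lemma log_abs_Gamma_sum (ν ℓ : ℕ) (hν : 1 ≤ ν) (w : ℝ) :
    2 * Real.log (‖Complex.Gamma ((w:ℂ) * Complex.I + (((ν:ℝ)+(ℓ:ℝ) : ℝ) : ℂ))‖) =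
      (∑ k ∈ Finset.range ℓ, Real.log (((ν:ℝ)+k)^2 + w^2))
        + 2 * Real.log (‖Complex.Gamma ((w:ℂ) * Complex.I + ((ν:ℝ) : ℂ))‖) := by
  set z : ℂ := (w:ℂ) * Complex.I + ((ν:ℝ) : ℂ) with hz
  have hzre : 0 < z.re := by
    simp only [hz, Complex.add_re, Complex.mul_re, Complex.I_re, Complex.I_im,
      Complex.ofReal_re, Complex.ofReal_im]
    have : (1:ℝ) ≤ (ν:ℝ) := by exact_mod_cast hν
    simp; linarith
  have harg : (w:ℂ) * Complex.I + (((ν:ℝ)+(ℓ:ℝ) : ℝ) : ℂ) = z + ℓ := by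
    rw [hz]; push_cast; ring
  rw [harg, Gamma_prod z hzre ℓ, norm_mul, norm_prod]
  have hGne : ‖Complex.Gamma z‖ ≠ 0 := by
    simpa using Complex.Gamma_ne_zero_of_re_pos hzre
  have hterm : ∀ k ∈ Finset.range ℓ, ‖z + k‖ ≠ 0 := by
    intro k _
    have : (0:ℝ) < (z + k).re := by
      simp only [Complex.add_re, Complex.natCast_re]
      have : (0:ℝ) ≤ (k:ℝ) := Nat.cast_nonneg k
      linarith
    intro h
    rw [norm_eq_zero] at h
    rw [h] at this; simp at this
  have hprodne : (∏ k ∈ Finset.range ℓ, ‖z + k‖) ≠ 0 :=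
    Finset.prod_ne_zero_iff.mpr hterm
  rw [Real.log_mul hprodne hGne, Real.log_prod hterm]
  rw [mul_add, Finset.mul_sum]
  congr 1
  refine Finset.sum_congr rfl fun k _ => ?_
  have h1 : 2 * Real.log (‖z + k‖) = Real.log ((‖z + k‖)^2) := by
    rw [Real.log_pow]; push_cast; ring
  rw [h1, Complex.sq_norm, Complex.normSq_apply]
  congr 1
  have hre : (z + (k:ℂ)).re = (ν:ℝ) + k := by
    simp [hz, Complex.add_re, Complex.mul_re]
  have him : (z + (k:ℂ)).im = w := by
    simp [hz, Complex.add_im, Complex.mul_im]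
  rw [hre, him]; ring

lemma two_re_diff (ν ℓ : ℕ) (hν : 1 ≤ ν) (w : ℝ) :
    2 * (Fgamma (ν:ℝ) ((w:ℂ) * Complex.I) - Fgamma ((ν:ℝ)+(ℓ:ℝ)) ((w:ℂ) * Complex.I)).re
      = -∑ k ∈ Finset.range ℓ,
          (Real.log (((ν:ℝ)+k)^2 + w^2) - Real.log (((ν:ℝ)+k)^2)) := by
  have hν0 : (0:ℝ) < ν := by exact_mod_cast hν
  have hνℓ0 : (0:ℝ) < (ν:ℝ)+(ℓ:ℝ) := by positivity
  rw [Complex.sub_re, reF _ hν0 w, reF _ hνℓ0 w]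
  have habs : ∀ a : ℝ, 0 < a →
      Real.log (Real.Gamma a)
        = Real.log (‖Complex.Gamma (((0:ℝ):ℂ) * Complex.I + (a:ℂ))‖) := by
    intro a ha
    simp [Complex.Gamma_ofReal, Complex.norm_real, abs_of_pos (Real.Gamma_pos_of_pos ha)]
  rw [habs _ hν0, habs _ hνℓ0]
  have hw := log_abs_Gamma_sum ν ℓ hν w
  have h0 := log_abs_Gamma_sum ν ℓ hν 0
  simp only [zero_pow, add_zero, ne_eq, OfNat.ofNat_ne_zero, not_false_eq_true] at h0
  rw [Finset.sum_sub_distrib]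
  linarith

lemma log_lb (c w : ℝ) (hc : 0 < c) :
    w^2 / (c^2 + w^2) ≤ Real.log (c^2 + w^2) - Real.log (c^2) := by
  have hden : (0:ℝ) < c^2 + w^2 := by positivity
  have hx : (0:ℝ) < c^2 / (c^2 + w^2) := by positivity
  have h := Real.log_le_sub_one_of_pos hx
  rw [Real.log_div (by positivity) (by positivity)] at h
  have : c^2 / (c^2 + w^2) - 1 = -(w^2 / (c^2 + w^2)) := by field_simp; ring
  linarith [this ▸ h]

lemma integral_bound (ν ℓ : ℕ) (hν : 1 ≤ ν) (w : ℝ) (hw : w ≠ 0) :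
    |w| * ∫ θ in ((ν : ℝ) / |w|)..(((ν : ℝ) + ℓ) / |w|), 1 / (1 + θ ^ 2)
      ≤ ∑ k ∈ Finset.range ℓ, w^2 / (((ν:ℝ)+k)^2 + w^2) := by
  have hW : (0:ℝ) < |w| := abs_pos.mpr hw
  set W := |w| with hWdef
  set a : ℕ → ℝ := fun k => ((ν:ℝ)+k)/W with ha
  have hcont : Continuous fun θ : ℝ => 1/(1+θ^2) :=
    continuous_const.div (by continuity) (fun x => by positivity)
  have hint : ∀ k ∈ Finset.range ℓ,
      IntervalIntegrable (fun θ => 1/(1+θ^2)) MeasureTheory.volume (a k) (a (k+1)) :=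
    fun k _ => hcont.intervalIntegrable _ _
  have hsplit := intervalIntegral.sum_integral_adjacent_intervals (μ := MeasureTheory.volume) (a := a) (n := ℓ)
    (fun k _ => hcont.intervalIntegrable (a k) (a (k+1)))
  have ha0 : a 0 = (ν:ℝ)/W := by simp [ha]
  have haℓ : a ℓ = ((ν:ℝ)+ℓ)/W := rfl
  rw [← haℓ, ← ha0, ← hsplit]
  have hak_nonneg : ∀ k : ℕ, 0 ≤ a k := fun k => by
    apply div_nonneg _ hW.le; positivity
  have hle : ∀ k : ℕ, a k ≤ a (k+1) := fun k => by
    apply (div_le_div_iff_of_pos_right hW).mpr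
    push_cast; linarith
  have hpiece : ∀ k ∈ Finset.range ℓ,
      ∫ θ in (a k)..(a (k+1)), 1/(1+θ^2) ≤ (1/W) * (w^2 / (((ν:ℝ)+k)^2 + w^2)) := by
    intro k _
    have hb : ∫ θ in (a k)..(a (k+1)), (1/(1+(a k)^2) : ℝ)
        = (a (k+1) - a k) * (1/(1+(a k)^2)) := by
      rw [intervalIntegral.integral_const]; simp [smul_eq_mul]
    have hmono : ∫ θ in (a k)..(a (k+1)), 1/(1+θ^2)
        ≤ ∫ θ in (a k)..(a (k+1)), (1/(1+(a k)^2) : ℝ) := by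
      apply intervalIntegral.integral_mono_on (hle k)
        (hcont.intervalIntegrable _ _) (continuous_const.intervalIntegrable _ _)
      intro x hx
      have hx1 : a k ≤ x := hx.1
      have : (a k)^2 ≤ x^2 := by nlinarith [hak_nonneg k]
      apply div_le_div_of_nonneg_left one_pos.le (by positivity)
      linarith
    have hdiff : a (k+1) - a k = 1/W := by
      rw [ha]; push_cast; field_simp; ring
    have hval : (1:ℝ)/(1+(a k)^2) = w^2 / (((ν:ℝ)+k)^2 + w^2) := by
      rw [ha]
      have hW2 : W^2 = w^2 := sq_abs w
      rw [div_pow, hW2, eq_div_iff (by positivity)]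
      field_simp
      ring
    calc ∫ θ in (a k)..(a (k+1)), 1/(1+θ^2)
        ≤ ∫ θ in (a k)..(a (k+1)), (1/(1+(a k)^2) : ℝ) := hmono
      _ = (a (k+1) - a k) * (1/(1+(a k)^2)) := hb
      _ = (1/W) * (w^2 / (((ν:ℝ)+k)^2 + w^2)) := by rw [hdiff, hval]
  calc W * ∑ k ∈ Finset.range ℓ, ∫ θ in (a k)..(a (k+1)), 1/(1+θ^2)
      ≤ W * ∑ k ∈ Finset.range ℓ, (1/W) * (w^2 / (((ν:ℝ)+k)^2 + w^2)) := by
        apply mul_le_mul_of_nonneg_left (Finset.sum_le_sum hpiece) hW.le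
    _ = ∑ k ∈ Finset.range ℓ, w^2 / (((ν:ℝ)+k)^2 + w^2) := by
        rw [Finset.mul_sum]
        refine Finset.sum_congr rfl fun k _ => ?_
        field_simp

theorem re_F_difference_integral_bound (ν ℓ : ℕ) (hν : 1 ≤ ν) (hℓ : 1 ≤ ℓ) (w : ℝ) :
    2 * (ν : ℝ) *
        (Fgamma (ν : ℝ) ((w : ℂ) * Complex.I)
          - Fgamma ((ν : ℝ) + (ℓ : ℝ)) ((w : ℂ) * Complex.I)).re ≤
      -(ν : ℝ) * |w| *
        ∫ θ in ((ν : ℝ) / |w|)..(((ν : ℝ) + ℓ) / |w|), 1 / (1 + θ ^ 2) := by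
  have hν0 : (0:ℝ) < ν := by exact_mod_cast hν
  have key := two_re_diff ν ℓ hν w
  have h1 : 2 * (ν:ℝ) *
      (Fgamma (ν : ℝ) ((w : ℂ) * Complex.I)
        - Fgamma ((ν : ℝ) + (ℓ : ℝ)) ((w : ℂ) * Complex.I)).re
      = (ν:ℝ) * (-∑ k ∈ Finset.range ℓ,
          (Real.log (((ν:ℝ)+k)^2 + w^2) - Real.log (((ν:ℝ)+k)^2))) := by
    rw [← key]; ring
  rw [h1]
  by_cases hw : w = 0
  · subst hw
    simp
  · have hintb := integral_bound ν ℓ hν w hw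
    have hsum : ∑ k ∈ Finset.range ℓ, w^2 / (((ν:ℝ)+k)^2 + w^2)
        ≤ ∑ k ∈ Finset.range ℓ,
            (Real.log (((ν:ℝ)+k)^2 + w^2) - Real.log (((ν:ℝ)+k)^2)) := by
      refine Finset.sum_le_sum fun k _ => log_lb _ _ ?_
      have : (0:ℝ) ≤ k := Nat.cast_nonneg k
      linarith
    have h2 : -∑ k ∈ Finset.range ℓ,
          (Real.log (((ν:ℝ)+k)^2 + w^2) - Real.log (((ν:ℝ)+k)^2))
        ≤ -(|w| * ∫ θ in ((ν : ℝ) / |w|)..(((ν : ℝ) + ℓ) / |w|), 1 / (1 + θ ^ 2)) := by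
      linarith
    calc (ν:ℝ) * (-∑ k ∈ Finset.range ℓ,
          (Real.log (((ν:ℝ)+k)^2 + w^2) - Real.log (((ν:ℝ)+k)^2)))
        ≤ (ν:ℝ) * (-(|w| * ∫ θ in ((ν : ℝ) / |w|)..(((ν : ℝ) + ℓ) / |w|), 1 / (1 + θ ^ 2))) :=
          mul_le_mul_of_nonneg_left h2 hν0.le
      _ = -(ν : ℝ) * |w| *
          ∫ θ in ((ν : ℝ) / |w|)..(((ν : ℝ) + ℓ) / |w|), 1 / (1 + θ ^ 2) := by ring
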